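/- arXiv:math/0505224 — 5 statements merged into one kernel-verified Lean document; each statement's English description precedes it below -/
import Mathlib

section
/- Let a and b be polynomials of degree at most n with factorizations a(z) = Π_{k=1}^n (1-α_k z) and b(z) = Π_{k=1}^n (1-β_k z). Define a_{-k}(z) = Π_{j=k+1}^n (1-α_j z) and b_{-k}(z) = Π_{j=k+1}^n (1-β_j z) (with a_0 = a, b_0 = b). Then (a(z)b(w) - a(w)b(z))/(z-w) = a(z)b(w) Σ_{k=1}^n (β_k - α_k) · a_{-k}(w)b_{-k}(z) / (a_{-(k-1)}(z) b_{-(k-1)}(w)), i.e., clearing denominators: a(z)b(w) - a(w)b(z) = (z-w) Σ_{k=1}^n (β_k - α_k) · [Π_{j=1}^{k-1}(1-α_j z)] · [Π_{j=k+1}^n (1-β_j z)] · [Π_{j=1}^{k-1}(1-β_j w)] · [Π_{j=k+1}^n (1-α_j w)]. -/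
/-- Full expansion of the Bezoutian form for `a(z) = ∏ₖ(1-αₖz)`, `b(z) = ∏ₖ(1-βₖz)`:
`a(z)b(w) - a(w)b(z) = (z-w) Σₖ (βₖ-αₖ) ∏_{j<k}(1-αⱼz) ∏_{j>k}(1-βⱼz) ∏_{j<k}(1-βⱼw) ∏_{j>k}(1-αⱼw)`. -/
theorem bezout_expansion (n : ℕ) (α β : ℕ → ℂ) (z w : ℂ) :
    (∏ k ∈ Finset.range n, (1 - α k * z)) * (∏ k ∈ Finset.range n, (1 - β k * w))
      - (∏ k ∈ Finset.range n, (1 - α k * w)) * (∏ k ∈ Finset.range n, (1 - β k * z))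
    = (z - w) * ∑ k ∈ Finset.range n, (β k - α k)
        * (∏ j ∈ Finset.range k, (1 - α j * z))
        * (∏ j ∈ Finset.Ico (k + 1) n, (1 - β j * z))
        * (∏ j ∈ Finset.range k, (1 - β j * w))
        * (∏ j ∈ Finset.Ico (k + 1) n, (1 - α j * w)) := by
  set f : ℕ → ℂ := fun k =>
    (∏ j ∈ Finset.range k, (1 - α j * z)) * (∏ j ∈ Finset.range k, (1 - β j * w))
      * (∏ j ∈ Finset.Ico k n, (1 - β j * z)) * (∏ j ∈ Finset.Ico k n, (1 - α j * w))
    with hf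
  rw [Finset.mul_sum]
  have key : ∀ k ∈ Finset.range n,
      (z - w) * ((β k - α k)
        * (∏ j ∈ Finset.range k, (1 - α j * z))
        * (∏ j ∈ Finset.Ico (k + 1) n, (1 - β j * z))
        * (∏ j ∈ Finset.range k, (1 - β j * w))
        * (∏ j ∈ Finset.Ico (k + 1) n, (1 - α j * w))) = f (k + 1) - f k := by
    intro k hk
    have hkn : k < n := Finset.mem_range.mp hk
    rw [hf]
    simp only [Finset.prod_range_succ,
      Finset.prod_eq_prod_Ico_succ_bot hkn (fun j => (1 - β j * z)),
      Finset.prod_eq_prod_Ico_succ_bot hkn (fun j => (1 - α j * w))]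
    ring
  rw [Finset.sum_congr rfl key, Finset.sum_range_sub f, hf]
  simp [Finset.Ico_self]
  ring
end

section
/- Let a, b be polynomials of degree at most n with a common factor (1-φz): a(z) = (1-φz)a_{-1}(z), b(z) = (1-φz)b_{-1}(z). Then the Bezout matrix factors as B(a,b) = U_φ · diag(B(a_{-1},b_{-1}), 0) · U_φ^T, where diag(B(a_{-1},b_{-1}), 0) is the n×n matrix with the (n-1)×(n-1) Bezout matrix B(a_{-1},b_{-1}) in the top left corner and zeros in the last row and column. -/
open Matrix

/-- The `n×n` lower bidiagonal matrix `U_φ` with `1` on the diagonal and `-φ` on the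
subdiagonal. -/
def Umat (n : ℕ) (φ : ℂ) : Matrix (Fin n) (Fin n) ℂ :=
  Matrix.of fun i j =>
    if (i : ℕ) = (j : ℕ) then 1 else if (i : ℕ) = (j : ℕ) + 1 then -φ else 0

lemma poly_zero (m : ℕ) (c : Fin m → ℂ) (s : Set ℂ) (hs : s.Infinite)
    (h : ∀ z ∈ s, ∑ i : Fin m, c i * z ^ (i : ℕ) = 0) : ∀ i, c i = 0 := by
  set p : Polynomial ℂ := ∑ i : Fin m, Polynomial.monomial (i : ℕ) (c i) with hp
  have hp0 : p = 0 := by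
    apply Polynomial.eq_zero_of_infinite_isRoot
    apply hs.mono
    intro z hz
    have := h z hz
    simp only [Set.mem_setOf_eq, Polynomial.IsRoot, hp, Polynomial.eval_finset_sum,
      Polynomial.eval_monomial]
    simpa using this
  intro i
  have hc := congrArg (fun q => Polynomial.coeff q (i : ℕ)) hp0
  simp only [hp, Polynomial.finset_sum_coeff, Polynomial.coeff_monomial,
    Polynomial.coeff_zero, Fin.val_inj] at hc
  simpa [Finset.sum_ite_eq'] using hc

lemma matrix_eq {m : ℕ} (M N : Matrix (Fin m) (Fin m) ℂ)
    (h : ∀ z w : ℂ, z ≠ w →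
      ∑ i : Fin m, ∑ j : Fin m, z ^ (i : ℕ) * M i j * w ^ (j : ℕ)
        = ∑ i : Fin m, ∑ j : Fin m, z ^ (i : ℕ) * N i j * w ^ (j : ℕ)) : M = N := by
  have key : ∀ (w : ℂ) (i : Fin m), ∑ j : Fin m, (M i j - N i j) * w ^ (j : ℕ) = 0 := by
    intro w
    apply poly_zero m _ {w}ᶜ ((Set.finite_singleton w).infinite_compl)
    intro z hz
    have hzw : z ≠ w := by simpa using hz
    have h0 := sub_eq_zero.mpr (h z w hzw)
    calc ∑ i : Fin m, (∑ j : Fin m, (M i j - N i j) * w ^ (j : ℕ)) * z ^ (i : ℕ)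
        = ∑ i : Fin m, ∑ j : Fin m,
            (z ^ (i : ℕ) * M i j * w ^ (j : ℕ) - z ^ (i : ℕ) * N i j * w ^ (j : ℕ)) := by
          refine Finset.sum_congr rfl fun i _ => ?_
          rw [Finset.sum_mul]
          exact Finset.sum_congr rfl fun j _ => by ring
      _ = 0 := by
          simpa [Finset.sum_sub_distrib] using h0
  ext i j
  have := poly_zero m (fun j => M i j - N i j) Set.univ Set.infinite_univ
    (fun w _ => key w i) j
  exact sub_eq_zero.mp this

lemma vecU (n : ℕ) (φ : ℂ) (z : ℂ) (k : Fin n) :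
    ∑ i : Fin (n + 1), z ^ (i : ℕ) * Umat (n + 1) φ i k.castSucc
      = (1 - φ * z) * z ^ (k : ℕ) := by
  have hterm : ∀ i : Fin (n + 1), z ^ (i : ℕ) * Umat (n + 1) φ i k.castSucc
      = (if i = k.castSucc then z ^ (k : ℕ) else 0)
        + (if i = k.succ then -(φ * z ^ ((k : ℕ) + 1)) else 0) := by
    intro i
    simp only [Umat, Matrix.of_apply, Fin.coe_castSucc]
    by_cases h1 : (i : ℕ) = (k : ℕ)
    · have hik : i = k.castSucc := Fin.ext (by simpa using h1)
      have hcs : k.castSucc ≠ k.succ := by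
        intro hh
        have := congrArg Fin.val hh
        simp [Fin.val_succ] at this
      simp [h1, hik, hcs]
    · by_cases h2 : (i : ℕ) = (k : ℕ) + 1
      · have hik : i = k.succ := Fin.ext (by simpa [Fin.val_succ] using h2)
        have hcs : k.succ ≠ k.castSucc := by
          intro hh
          have := congrArg Fin.val hh
          simp [Fin.val_succ] at this
        simp [h1, h2, hik, hcs]
        ring
      · have hn1 : i ≠ k.castSucc := by
          intro hh; apply h1; simpa using congrArg Fin.val hh
        have hn2 : i ≠ k.succ := by
          intro hh; apply h2; simpa [Fin.val_succ] using congrArg Fin.val hh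
        simp [h1, h2, hn1, hn2]
  rw [Finset.sum_congr rfl fun i _ => hterm i, Finset.sum_add_distrib]
  simp [Finset.sum_ite_eq']
  ring

/-- If `a` and `b` have the common factor `(1-φz)`, `a = (1-φz)a₁`, `b = (1-φz)b₁`,
then the Bezout matrix factors as
`B(a,b) = U_φ · diag(B(a₁,b₁), 0) · U_φᵀ`.
Here the Bezout matrices are characterized by the defining relation
`a(z)b(w) - a(w)b(z) = (z-w) u(z)ᵀ B u(w)`. -/
theorem bezout_common_factor (n : ℕ) (a b a₁ b₁ : Polynomial ℂ) (φ : ℂ)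
    (ha : a.natDegree ≤ n + 1) (hb : b.natDegree ≤ n + 1)
    (ha₁ : a₁.natDegree ≤ n) (hb₁ : b₁.natDegree ≤ n)
    (hfa : a = (1 - Polynomial.C φ * Polynomial.X) * a₁)
    (hfb : b = (1 - Polynomial.C φ * Polynomial.X) * b₁)
    (Bab : Matrix (Fin (n + 1)) (Fin (n + 1)) ℂ) (Bsub : Matrix (Fin n) (Fin n) ℂ)
    (hBab : ∀ z w : ℂ, a.eval z * b.eval w - a.eval w * b.eval z
      = (z - w) * ∑ i : Fin (n + 1), ∑ j : Fin (n + 1),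
          z ^ (i : ℕ) * Bab i j * w ^ (j : ℕ))
    (hBsub : ∀ z w : ℂ, a₁.eval z * b₁.eval w - a₁.eval w * b₁.eval z
      = (z - w) * ∑ i : Fin n, ∑ j : Fin n, z ^ (i : ℕ) * Bsub i j * w ^ (j : ℕ)) :
    Bab = Umat (n + 1) φ *
      (Matrix.of fun i j : Fin (n + 1) =>
        if hi : (i : ℕ) < n then
          if hj : (j : ℕ) < n then Bsub ⟨i, hi⟩ ⟨j, hj⟩ else 0
        else 0) * (Umat (n + 1) φ)ᵀ := by
  set U := Umat (n + 1) φ with hU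
  set Δ : Matrix (Fin (n + 1)) (Fin (n + 1)) ℂ :=
    Matrix.of fun i j : Fin (n + 1) =>
      if hi : (i : ℕ) < n then
        if hj : (j : ℕ) < n then Bsub ⟨i, hi⟩ ⟨j, hj⟩ else 0
      else 0 with hΔ
  have hΔlast : ∀ l, Δ (Fin.last n) l = 0 := by
    intro l; simp [hΔ, Fin.val_last]
  have hΔlast' : ∀ k, Δ k (Fin.last n) = 0 := by
    intro k; simp [hΔ, Fin.val_last]
  have hΔcast : ∀ k l : Fin n, Δ k.castSucc l.castSucc = Bsub k l := by
    intro k l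
    simp [hΔ, k.isLt, l.isLt]
  -- generating function of the RHS
  have hrhs : ∀ z w : ℂ,
      ∑ i : Fin (n + 1), ∑ j : Fin (n + 1),
          z ^ (i : ℕ) * (U * Δ * Uᵀ) i j * w ^ (j : ℕ)
        = (1 - φ * z) * (1 - φ * w)
            * ∑ k : Fin n, ∑ l : Fin n, z ^ (k : ℕ) * Bsub k l * w ^ (l : ℕ) := by
    intro z w
    have h1 : ∑ i : Fin (n + 1), ∑ j : Fin (n + 1),
        z ^ (i : ℕ) * (U * Δ * Uᵀ) i j * w ^ (j : ℕ)
        = (fun i : Fin (n+1) => z ^ (i : ℕ)) ⬝ᵥ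
            ((U * Δ * Uᵀ) *ᵥ fun j : Fin (n+1) => w ^ (j : ℕ)) := by
      simp [dotProduct, Matrix.mulVec, Finset.mul_sum, mul_assoc]
    rw [h1, ← Matrix.mulVec_mulVec, ← Matrix.mulVec_mulVec, Matrix.dotProduct_mulVec]
    have hz : ((fun i : Fin (n+1) => z ^ (i : ℕ)) ᵥ* U)
        = fun k => ∑ i : Fin (n+1), z ^ (i : ℕ) * U i k := by
      funext k; simp [Matrix.vecMul, dotProduct]
    have hw : (Uᵀ *ᵥ fun j : Fin (n+1) => w ^ (j : ℕ))
        = fun l => ∑ j : Fin (n+1), w ^ (j : ℕ) * U j l := by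
      funext l; simp [Matrix.mulVec, dotProduct, Matrix.transpose_apply, mul_comm]
    rw [hz, hw]
    show ∑ k : Fin (n+1), (∑ i : Fin (n+1), z ^ (i:ℕ) * U i k)
        * ∑ l : Fin (n+1), Δ k l * ∑ j : Fin (n+1), w ^ (j:ℕ) * U j l = _
    rw [Fin.sum_univ_castSucc]
    simp only [hΔlast, zero_mul, Finset.sum_const_zero, mul_zero, add_zero]
    calc ∑ k : Fin n, (∑ i : Fin (n+1), z ^ (i:ℕ) * U i k.castSucc)
          * ∑ l : Fin (n+1), Δ k.castSucc l * ∑ j : Fin (n+1), w ^ (j:ℕ) * U j l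
        = ∑ k : Fin n, ((1 - φ * z) * z ^ (k:ℕ))
            * ∑ l : Fin n, Bsub k l * ((1 - φ * w) * w ^ (l:ℕ)) := by
          refine Finset.sum_congr rfl fun k _ => ?_
          rw [vecU, Fin.sum_univ_castSucc, hΔlast', zero_mul, add_zero]
          congr 1
          exact Finset.sum_congr rfl fun l _ => by rw [hΔcast, vecU]
      _ = (1 - φ * z) * (1 - φ * w)
            * ∑ k : Fin n, ∑ l : Fin n, z ^ (k:ℕ) * Bsub k l * w ^ (l:ℕ) := by
          rw [Finset.mul_sum]
          refine Finset.sum_congr rfl fun k _ => ?_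
          rw [Finset.mul_sum, Finset.mul_sum]
          exact Finset.sum_congr rfl fun l _ => by ring
  have ea : ∀ t : ℂ, a.eval t = (1 - φ * t) * a₁.eval t := by
    intro t; rw [hfa]; simp
  have eb : ∀ t : ℂ, b.eval t = (1 - φ * t) * b₁.eval t := by
    intro t; rw [hfb]; simp
  apply matrix_eq
  intro z w hzw
  have hcalc : (z - w) * ((1 - φ * z) * (1 - φ * w)
      * ∑ k : Fin n, ∑ l : Fin n, z ^ (k:ℕ) * Bsub k l * w ^ (l:ℕ))
      = (z - w) * ∑ i : Fin (n+1), ∑ j : Fin (n+1), z ^ (i:ℕ) * Bab i j * w ^ (j:ℕ) := by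
    calc (z - w) * ((1 - φ * z) * (1 - φ * w)
          * ∑ k : Fin n, ∑ l : Fin n, z ^ (k:ℕ) * Bsub k l * w ^ (l:ℕ))
        = (1 - φ * z) * (1 - φ * w)
            * ((z - w) * ∑ k : Fin n, ∑ l : Fin n, z ^ (k:ℕ) * Bsub k l * w ^ (l:ℕ)) := by
          ring
      _ = (1 - φ * z) * (1 - φ * w)
            * (a₁.eval z * b₁.eval w - a₁.eval w * b₁.eval z) := by rw [← hBsub z w]
      _ = a.eval z * b.eval w - a.eval w * b.eval z := by
          rw [ea, ea, eb, eb]; ring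
      _ = (z - w) * ∑ i : Fin (n+1), ∑ j : Fin (n+1),
            z ^ (i:ℕ) * Bab i j * w ^ (j:ℕ) := hBab z w
  have hzw' : z - w ≠ 0 := sub_ne_zero.mpr hzw
  have := mul_left_cancel₀ hzw' hcalc
  rw [hrhs z w]
  exact this.symm
end

section
/- The identity u_n(z)^T · U_{α_1} ⋯ U_{α_{k-1}} U_{β_{k+1}} ⋯ U_{β_n} · e = Π_{j=1}^{k-1}(1-α_j z) · Π_{j=k+1}^n (1-β_j z) holds, where e is the first standard basis vector of R^n and u_n(z) = (1, z, ..., z^{n-1})^T. -/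
open Matrix

lemma list_prod_range {M : Type*} [CommMonoid M] (f : ℕ → M) (m : ℕ) :
    ((List.range m).map f).prod = ∏ j ∈ Finset.range m, f j := by
  induction m with
  | zero => simp
  | succ m ih => rw [List.range_succ, List.map_append, List.prod_append,
      Finset.prod_range_succ, ih]; simp

lemma vecMul_Umat (n : ℕ) (z φ : ℂ) (j : Fin n) :
    ((fun i : Fin n => z ^ (i : ℕ)) ᵥ* Umat n φ) j =
      if (j : ℕ) + 1 < n then z ^ (j : ℕ) - φ * z ^ ((j : ℕ) + 1) else z ^ (j : ℕ) := by
  classical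
  simp only [vecMul, dotProduct, Umat, of_apply]
  by_cases hj : (j : ℕ) + 1 < n
  · rw [if_pos hj]
    have hpt : ∀ i : Fin n,
        z ^ (i : ℕ) * (if (i : ℕ) = (j : ℕ) then (1 : ℂ)
          else if (i : ℕ) = (j : ℕ) + 1 then -φ else 0)
        = (if i = j then z ^ (j : ℕ) else 0) +
          (if i = (⟨(j : ℕ) + 1, hj⟩ : Fin n) then -(φ * z ^ ((j : ℕ) + 1)) else 0) := by
      intro i
      by_cases h1 : (i : ℕ) = (j : ℕ)
      · have e1 : i = j := Fin.ext h1
        have e2 : i ≠ (⟨(j : ℕ) + 1, hj⟩ : Fin n) := by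
          intro hh
          have := congrArg Fin.val hh
          simp only [] at this
          omega
        rw [if_pos h1, if_pos e1, if_neg e2, h1]
        ring
      · by_cases h2 : (i : ℕ) = (j : ℕ) + 1
        · have e1 : i ≠ j := fun hh => h1 (congrArg Fin.val hh)
          have e2 : i = (⟨(j : ℕ) + 1, hj⟩ : Fin n) := Fin.ext h2
          rw [if_neg h1, if_pos h2, if_neg e1, if_pos e2, h2]
          ring
        · have e1 : i ≠ j := fun hh => h1 (congrArg Fin.val hh)
          have e2 : i ≠ (⟨(j : ℕ) + 1, hj⟩ : Fin n) := by
            intro hh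
            have := congrArg Fin.val hh
            simp only [] at this
            omega
          rw [if_neg h1, if_neg h2, if_neg e1, if_neg e2]
          ring
    rw [Finset.sum_congr rfl fun i _ => hpt i, Finset.sum_add_distrib,
      Finset.sum_ite_eq' Finset.univ j, Finset.sum_ite_eq' Finset.univ (⟨(j : ℕ) + 1, hj⟩ : Fin n)]
    simp only [Finset.mem_univ, if_pos]
    ring
  · rw [if_neg hj]
    rw [Finset.sum_eq_single j]
    · simp
    · intro i _ h
      have h3 : (i : ℕ) ≠ (j : ℕ) := fun hh => h (Fin.ext hh)
      have h4 : (i : ℕ) ≠ (j : ℕ) + 1 := by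
        intro hh; exact absurd (hh ▸ i.isLt) hj
      simp [h3, h4]
    · simp

/-- support lemma: the vector `(∏ U) e` vanishes above index `l.length`. -/
lemma Uprod_e_supp (n : ℕ) :
    ∀ (l : List ℂ) (i : Fin n), l.length < (i : ℕ) →
      ((l.map (Umat n)).prod.mulVec
        (fun i : Fin n => if (i : ℕ) = 0 then (1 : ℂ) else 0)) i = 0 := by
  intro l
  induction l with
  | nil =>
      intro i hi
      simp only [List.map_nil, List.prod_nil, one_mulVec]
      have : (i : ℕ) ≠ 0 := by omega
      simp [this]
  | cons φ l ih =>
      intro i hi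
      simp only [List.length_cons] at hi
      rw [List.map_cons, List.prod_cons, ← Matrix.mulVec_mulVec]
      set w := (l.map (Umat n)).prod.mulVec
        (fun i : Fin n => if (i : ℕ) = 0 then (1 : ℂ) else 0) with hw
      show ∑ j, Umat n φ i j * w j = 0
      apply Finset.sum_eq_zero
      intro j _
      by_cases h1 : (i : ℕ) = (j : ℕ)
      · have h0 : w j = 0 := ih j (by omega)
        simp [Umat, h1, h0]
      · by_cases h2 : (i : ℕ) = (j : ℕ) + 1
        · have h0 : w j = 0 := ih j (by omega)
          simp [Umat, h1, h2, h0]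
        · simp [Umat, h1, h2]

lemma key (n : ℕ) (z : ℂ) :
    ∀ (l : List ℂ), l.length < n →
      dotProduct (fun i : Fin n => z ^ (i : ℕ))
        ((l.map (Umat n)).prod.mulVec
          (fun i : Fin n => if (i : ℕ) = 0 then (1 : ℂ) else 0))
      = (l.map (fun φ => 1 - φ * z)).prod := by
  intro l
  induction l with
  | nil =>
      intro hn
      simp only [List.map_nil, List.prod_nil, one_mulVec, dotProduct]
      rw [Finset.sum_eq_single (⟨0, hn⟩ : Fin n)]
      · simp
      · intro i _ h
        have : (i : ℕ) ≠ 0 := by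
          intro hh; exact h (Fin.ext hh)
        simp [this]
      · simp
  | cons φ l ih =>
      intro hn
      simp only [List.length_cons] at hn
      have hln : l.length < n := by omega
      rw [List.map_cons, List.prod_cons, ← Matrix.mulVec_mulVec,
        dotProduct_mulVec]
      set w := (l.map (Umat n)).prod.mulVec
        (fun i : Fin n => if (i : ℕ) = 0 then (1 : ℂ) else 0) with hw
      have hdot : ((fun i : Fin n => z ^ (i : ℕ)) ᵥ* Umat n φ) ⬝ᵥ w
          = (1 - φ * z) * ((fun i : Fin n => z ^ (i : ℕ)) ⬝ᵥ w) := by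
        simp only [dotProduct, Finset.mul_sum]
        apply Finset.sum_congr rfl
        intro j _
        rw [vecMul_Umat]
        by_cases hj : (j : ℕ) + 1 < n
        · rw [if_pos hj]; ring
        · rw [if_neg hj]
          have hwj : w j = 0 := Uprod_e_supp n l j (by omega)
          simp [hwj]
      rw [hdot, ih hln, List.map_cons, List.prod_cons]

/-- The key identity
`uₙ(z)ᵀ U_{α₁} ⋯ U_{α_{k-1}} U_{β_{k+1}} ⋯ U_{β_n} e = ∏_{j=1}^{k-1}(1-αⱼz) ∏_{j=k+1}^{n}(1-βⱼz)`,
where `e` is the first standard basis vector of `ℝⁿ` and `uₙ(z) = (1,z,…,z^{n-1})ᵀ`. -/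
theorem uT_Uprod_e (n k : ℕ) (hk1 : 1 ≤ k) (hkn : k ≤ n) (α β : ℕ → ℂ) (z : ℂ) :
    dotProduct (fun i : Fin n => z ^ (i : ℕ))
      (((((List.range (k - 1)).map fun j => Umat n (α (j + 1))).prod *
          ((List.range (n - k)).map fun j => Umat n (β (k + 1 + j))).prod).mulVec
        (fun i : Fin n => if (i : ℕ) = 0 then 1 else 0)))
    = (∏ j ∈ Finset.Icc 1 (k - 1), (1 - α j * z)) *
        ∏ j ∈ Finset.Icc (k + 1) n, (1 - β j * z) := by
  classical
  set l : List ℂ := ((List.range (k - 1)).map fun j => α (j + 1)) ++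
    ((List.range (n - k)).map fun j => β (k + 1 + j)) with hl
  have hmap : (l.map (Umat n)).prod =
      (((List.range (k - 1)).map fun j => Umat n (α (j + 1))).prod *
        ((List.range (n - k)).map fun j => Umat n (β (k + 1 + j))).prod) := by
    rw [hl, List.map_append, List.prod_append, List.map_map, List.map_map]
    rfl
  have hlen : l.length < n := by
    simp only [hl, List.length_append, List.length_map, List.length_range]
    omega
  rw [← hmap, key n z l hlen]
  rw [hl, List.map_append, List.prod_append, List.map_map, List.map_map,
    list_prod_range, list_prod_range]
  congr 1
  · have h1 : Finset.Icc 1 (k - 1) = Finset.Ico 1 k := by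
      rw [← Finset.Ico_add_one_right_eq_Icc]
      congr 1
      omega
    rw [h1, Finset.prod_Ico_eq_prod_range]
    have h2 : k - 1 = k - 1 := rfl
    apply Finset.prod_congr rfl
    intro j _
    simp only [Function.comp_apply]
    rw [Nat.add_comm 1 j]
  · have h2 : Finset.Icc (k + 1) n = Finset.Ico (k + 1) (n + 1) := by
      rw [Finset.Ico_add_one_right_eq_Icc]
    rw [h2, Finset.prod_Ico_eq_prod_range]
    have h3 : n + 1 - (k + 1) = n - k := by omega
    rw [h3]
    apply Finset.prod_congr rfl
    intro j _
    simp only [Function.comp_apply]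
end

section
/- Let F_a = J - e_p a^T and F_c = J - e_q c^T be the companion-type matrices of â and ĉ, F = diag(F_a, F_c), and B = (e_p^T, -e_q^T)^T. If â and ĉ have no common zeros, then the pair (F, B) is controllable, i.e., the controllability matrix (B, FB, ..., F^{p+q-1}B) has full rank p+q. Conversely, if â and ĉ have a common zero, then (F, B) is not controllable. -/
open Matrix

/-- The block diagonal matrix `F = diag(J - e_p aᵀ, J - e_q cᵀ)` built from the
coefficient vectors `a = (a₁,…,a_p)` and `c = (c₁,…,c_q)` of the monic polynomials
`â` and `ĉ` (given as functions `ℕ → ℂ`, where `a k` denotes `a_k`). -/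
def blockF (p q : ℕ) (a c : ℕ → ℂ) : Matrix (Fin (p + q)) (Fin (p + q)) ℂ :=
  Matrix.of fun i j =>
    if (i : ℕ) < p ∧ (j : ℕ) < p then
      (if (i : ℕ) = (j : ℕ) + 1 then 1 else 0) - (if (i : ℕ) = 0 then a ((j : ℕ) + 1) else 0)
    else if p ≤ (i : ℕ) ∧ p ≤ (j : ℕ) then
      (if (i : ℕ) = (j : ℕ) + 1 then 1 else 0) -
        (if (i : ℕ) = p then c ((j : ℕ) - p + 1) else 0)
    else 0

/-- The input vector `B = (e_pᵀ, -e_qᵀ)ᵀ`. -/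
def vecB (p q : ℕ) : Fin (p + q) → ℂ := fun i =>
  if (i : ℕ) = 0 then 1 else if (i : ℕ) = p then -1 else 0


/-- Horner-type partial polynomial `λ^m + b₁λ^{m-1} + ⋯ + b_m`. -/
noncomputable def polyEv (lam : ℂ) (b : ℕ → ℂ) (m : ℕ) : ℂ :=
  lam ^ m + ∑ k ∈ Finset.range m, b (k + 1) * lam ^ (m - 1 - k)

lemma polyEv_zero (lam : ℂ) (b : ℕ → ℂ) : polyEv lam b 0 = 1 := by simp [polyEv]

lemma polyEv_succ (lam : ℂ) (b : ℕ → ℂ) (m : ℕ) :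
    polyEv lam b (m + 1) = lam * polyEv lam b m + b (m + 1) := by
  simp only [polyEv, Finset.sum_range_succ, mul_add, Finset.mul_sum]
  have h1 : ∀ k ∈ Finset.range m, b (k+1) * lam ^ (m + 1 - 1 - k) =
      lam * (b (k+1) * lam ^ (m - 1 - k)) := by
    intro k hk
    rw [Finset.mem_range] at hk
    have : m + 1 - 1 - k = (m - 1 - k) + 1 := by omega
    rw [this, pow_succ]; ring
  rw [Finset.sum_congr rfl h1]
  have : m + 1 - 1 - m = 0 := by omega
  rw [this, pow_zero, pow_succ]
  ring

/-- Summing an indicator against a vector. -/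
lemma sum_ite_coe {n : ℕ} (w : Fin n → ℂ) (i0 : ℕ) (x : ℂ) :
    (∑ i : Fin n, w i * (if (i : ℕ) = i0 then x else 0)) =
      if h : i0 < n then w ⟨i0, h⟩ * x else 0 := by
  split
  · rename_i h
    rw [Finset.sum_eq_single (⟨i0, h⟩ : Fin n)]
    · simp
    · intro i _ hi
      have : (i : ℕ) ≠ i0 := fun hc => hi (Fin.ext hc)
      simp [this]
    · simp
  · rename_i h
    apply Finset.sum_eq_zero
    intro i _
    have : (i : ℕ) ≠ i0 := by have := i.isLt; omega
    simp [this]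

lemma vecMul_blockF {p q : ℕ} (hp : 0 < p) (hq : 0 < q) (a c : ℕ → ℂ)
    (w : Fin (p + q) → ℂ) (j : Fin (p + q)) :
    (w ᵥ* blockF p q a c) j =
      if hj : (j : ℕ) < p then
        (if h : (j : ℕ) + 1 < p then w ⟨(j : ℕ) + 1, by omega⟩ else 0) -
          w ⟨0, by omega⟩ * a ((j : ℕ) + 1)
      else
        (if h : (j : ℕ) + 1 < p + q then w ⟨(j : ℕ) + 1, h⟩ else 0) -
          w ⟨p, by omega⟩ * c ((j : ℕ) - p + 1) := by
  have hjlt := j.isLt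
  rw [Matrix.vecMul, dotProduct]
  by_cases hj : (j : ℕ) < p
  · rw [dif_pos hj]
    by_cases h1 : (j : ℕ) + 1 < p
    · have hF : ∀ i : Fin (p + q), blockF p q a c i j =
          (if (i : ℕ) = (j : ℕ) + 1 then (1:ℂ) else 0) -
            (if (i : ℕ) = 0 then a ((j : ℕ) + 1) else 0) := by
        intro i
        simp only [blockF, Matrix.of_apply]
        split_ifs <;> first | rfl | (exfalso; omega) | ring1
      simp only [hF, mul_sub]
      rw [Finset.sum_sub_distrib, sum_ite_coe, sum_ite_coe,
        dif_pos (by omega : (j:ℕ)+1 < p+q), dif_pos (by omega : 0 < p+q), dif_pos h1, mul_one]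
    · have hF : ∀ i : Fin (p + q), blockF p q a c i j =
          0 - (if (i : ℕ) = 0 then a ((j : ℕ) + 1) else 0) := by
        intro i
        simp only [blockF, Matrix.of_apply]
        split_ifs <;> first | rfl | (exfalso; omega) | ring1
      simp only [hF, mul_sub]
      rw [Finset.sum_sub_distrib, sum_ite_coe, dif_pos (by omega : 0 < p+q), dif_neg h1]
      simp
  · rw [dif_neg hj]
    have hF : ∀ i : Fin (p + q), blockF p q a c i j =
        (if (i : ℕ) = (j : ℕ) + 1 then (1:ℂ) else 0) -
          (if (i : ℕ) = p then c ((j : ℕ) - p + 1) else 0) := by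
      intro i
      simp only [blockF, Matrix.of_apply]
      split_ifs <;> first | rfl | (exfalso; omega) | ring1
    simp only [hF, mul_sub]
    rw [Finset.sum_sub_distrib, sum_ite_coe, sum_ite_coe, dif_pos (by omega : p < p+q)]
    by_cases h1 : (j : ℕ) + 1 < p + q
    · rw [dif_pos h1, dif_pos h1, mul_one]
    · rw [dif_neg h1, dif_neg h1]

lemma dot_vecB {p q : ℕ} (hp : 0 < p) (hq : 0 < q) (w : Fin (p + q) → ℂ) :
    w ⬝ᵥ vecB p q = w ⟨0, by omega⟩ - w ⟨p, by omega⟩ := by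
  rw [dotProduct]
  have hB : ∀ i : Fin (p + q), vecB p q i =
      (if (i : ℕ) = 0 then (1:ℂ) else 0) - (if (i : ℕ) = p then (1:ℂ) else 0) := by
    intro i
    simp only [vecB]
    split_ifs <;> first | rfl | (exfalso; omega) | ring1
  simp only [hB, mul_sub]
  rw [Finset.sum_sub_distrib, sum_ite_coe, sum_ite_coe,
    dif_pos (by omega : 0 < p+q), dif_pos (by omega : p < p+q), mul_one, mul_one]

/-- The explicit left eigenvector attached to a common root. -/
noncomputable def eigVec (p q : ℕ) (lam : ℂ) (a c : ℕ → ℂ) : Fin (p + q) → ℂ :=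
  fun i => if (i : ℕ) < p then polyEv lam a i else polyEv lam c ((i : ℕ) - p)

lemma eigVec_vecMul {p q : ℕ} (hp : 0 < p) (hq : 0 < q) (lam : ℂ) (a c : ℕ → ℂ)
    (ha : polyEv lam a p = 0) (hc : polyEv lam c q = 0) :
    eigVec p q lam a c ᵥ* blockF p q a c = lam • eigVec p q lam a c := by
  funext j
  have hjlt := j.isLt
  rw [vecMul_blockF hp hq, Pi.smul_apply, smul_eq_mul]
  by_cases hj : (j : ℕ) < p
  · rw [dif_pos hj]
    have h0 : eigVec p q lam a c ⟨0, by omega⟩ = 1 := by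
      simp [eigVec, hp, polyEv_zero]
    rw [h0, one_mul]
    have hwj : eigVec p q lam a c j = polyEv lam a j := by simp [eigVec, hj]
    rw [hwj]
    by_cases h1 : (j : ℕ) + 1 < p
    · rw [dif_pos h1]
      have : eigVec p q lam a c ⟨(j:ℕ)+1, by omega⟩ = polyEv lam a ((j:ℕ)+1) := by
        simp [eigVec, h1]
      rw [this, polyEv_succ]; ring
    · rw [dif_neg h1]
      have hje : (j : ℕ) + 1 = p := by omega
      have := polyEv_succ lam a (j : ℕ)
      rw [hje, ha] at this
      rw [hje]
      linear_combination this
  · rw [dif_neg hj]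
    have hP : eigVec p q lam a c ⟨p, by omega⟩ = 1 := by
      simp [eigVec, polyEv_zero]
    rw [hP, one_mul]
    have hwj : eigVec p q lam a c j = polyEv lam c ((j:ℕ) - p) := by simp [eigVec, hj]
    rw [hwj]
    by_cases h1 : (j : ℕ) + 1 < p + q
    · rw [dif_pos h1]
      have : eigVec p q lam a c ⟨(j:ℕ)+1, h1⟩ = polyEv lam c ((j:ℕ) + 1 - p) := by
        simp only [eigVec]
        rw [if_neg (by omega)]
      rw [this, show (j:ℕ) + 1 - p = ((j:ℕ) - p) + 1 by omega, polyEv_succ]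
      ring
    · rw [dif_neg h1]
      have hje : (j : ℕ) - p + 1 = q := by omega
      have := polyEv_succ lam c ((j : ℕ) - p)
      rw [hje, hc] at this
      rw [hje]
      linear_combination this

lemma rank_lt_of_left_kernel {n : ℕ} (M : Matrix (Fin n) (Fin n) ℂ) (w : Fin n → ℂ)
    (hw : w ≠ 0) (h : Mᵀ *ᵥ w = 0) : M.rank < n := by
  rw [← Matrix.rank_transpose M]
  have hker : w ∈ LinearMap.ker Mᵀ.mulVecLin := by
    rw [LinearMap.mem_ker, Matrix.mulVecLin_apply]; exact h
  have hkpos : 0 < Module.finrank ℂ (LinearMap.ker Mᵀ.mulVecLin) := by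
    rw [Module.finrank_pos_iff]
    exact nontrivial_of_ne ⟨w, hker⟩ 0 (by simpa using hw)
  have hrn := LinearMap.finrank_range_add_finrank_ker Mᵀ.mulVecLin
  rw [Module.finrank_pi] at hrn
  simp only [Fintype.card_fin] at hrn
  rw [Matrix.rank]
  omega

lemma vecMul_pow_of_eig {n : ℕ} {F : Matrix (Fin n) (Fin n) ℂ} {w : Fin n → ℂ} {lam : ℂ}
    (h : w ᵥ* F = lam • w) (k : ℕ) : w ᵥ* F ^ k = lam ^ k • w := by
  induction k with
  | zero => simp
  | succ k ih =>
      rw [pow_succ, ← Matrix.vecMul_vecMul, ih, Matrix.smul_vecMul, h, smul_smul, ← pow_succ]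

lemma rank_lt_of_common_zero {p q : ℕ} (hp : 0 < p) (hq : 0 < q) (lam : ℂ) (a c : ℕ → ℂ)
    (ha : polyEv lam a p = 0) (hc : polyEv lam c q = 0) :
    (Matrix.of fun (i j : Fin (p + q)) =>
        ((blockF p q a c ^ (j : ℕ)).mulVec (vecB p q)) i).rank < p + q := by
  set w := eigVec p q lam a c with hw
  apply rank_lt_of_left_kernel _ w
  · intro h0
    have : w ⟨0, by omega⟩ = 1 := by simp [hw, eigVec, hp, polyEv_zero]
    rw [h0] at this
    simpa using this.symm
  · funext j
    have : ∀ i : Fin (p + q),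
        (Matrix.of fun (i j : Fin (p + q)) =>
          ((blockF p q a c ^ (j : ℕ)).mulVec (vecB p q)) i)ᵀ j i * w i =
        w i * ((blockF p q a c ^ (j : ℕ)) *ᵥ vecB p q) i := by
      intro i; simp [Matrix.transpose_apply, mul_comm]
    rw [Matrix.mulVec, Pi.zero_apply, dotProduct, Finset.sum_congr rfl fun i _ => this i]
    have hdp : (∑ i, w i * ((blockF p q a c ^ (j : ℕ)) *ᵥ vecB p q) i) =
        w ⬝ᵥ ((blockF p q a c ^ (j : ℕ)) *ᵥ vecB p q) := rfl
    rw [hdp, Matrix.dotProduct_mulVec,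
      vecMul_pow_of_eig (eigVec_vecMul hp hq lam a c ha hc) (j : ℕ),
      smul_dotProduct, dot_vecB hp hq]
    simp [hw, eigVec, hp, polyEv_zero]

lemma krylov_mem {n : ℕ} (F : Matrix (Fin n) (Fin n) ℂ) (B : Fin n → ℂ) (m : ℕ) :
    F ^ m *ᵥ B ∈ Submodule.span ℂ (Set.range fun j : Fin n => F ^ (j : ℕ) *ᵥ B) := by
  induction m using Nat.strong_induction_on with
  | _ m ih =>
    by_cases hm : m < n
    · exact Submodule.subset_span ⟨⟨m, hm⟩, rfl⟩
    · push_neg at hm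
      rcases Nat.eq_zero_or_pos n with hn0 | hn0
      · subst hn0
        have hz : F ^ m *ᵥ B = 0 := Subsingleton.elim _ _
        rw [hz]; exact Submodule.zero_mem _
      have sum_mv : ∀ (s : Finset ℕ) (G : ℕ → Matrix (Fin n) (Fin n) ℂ),
          (∑ i ∈ s, G i) *ᵥ B = ∑ i ∈ s, G i *ᵥ B := by
        intro s G
        induction s using Finset.cons_induction with
        | empty => simp [Matrix.zero_mulVec]
        | cons x s hx ih2 => rw [Finset.sum_cons, Finset.sum_cons, Matrix.add_mulVec, ih2]
      have hchar := Matrix.aeval_self_charpoly F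
      rw [Polynomial.aeval_eq_sum_range] at hchar
      have hdeg : F.charpoly.natDegree = n := by
        rw [Matrix.charpoly_natDegree_eq_dim, Fintype.card_fin]
      rw [hdeg, Finset.sum_range_succ] at hchar
      have hmonic : F.charpoly.coeff n = 1 := by
        have h := F.charpoly_monic
        rw [Polynomial.Monic, Polynomial.leadingCoeff, hdeg] at h
        exact h
      rw [hmonic, one_smul] at hchar
      have hFn : F ^ n = -∑ i ∈ Finset.range n, F.charpoly.coeff i • F ^ i :=
        eq_neg_of_add_eq_zero_right hchar
      have hsplit : F ^ m *ᵥ B = F ^ (m - n) *ᵥ (F ^ n *ᵥ B) := by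
        rw [Matrix.mulVec_mulVec, ← pow_add, Nat.sub_add_cancel hm]
      have hFnB : F ^ n *ᵥ B = -∑ i ∈ Finset.range n, F.charpoly.coeff i • (F ^ i *ᵥ B) := by
        rw [hFn, Matrix.neg_mulVec, sum_mv]
        congr 1
        exact Finset.sum_congr rfl fun i _ => Matrix.smul_mulVec _ _ _
      rw [hsplit, hFnB, Matrix.mulVec_neg]
      have hlin : F ^ (m - n) *ᵥ (∑ i ∈ Finset.range n, F.charpoly.coeff i • (F ^ i *ᵥ B)) =
          ∑ i ∈ Finset.range n, F.charpoly.coeff i • (F ^ (m - n) *ᵥ (F ^ i *ᵥ B)) := by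
        simp only [← Matrix.mulVecLin_apply, map_sum, _root_.map_smul]
      rw [hlin]
      apply Submodule.neg_mem
      apply Submodule.sum_mem
      intro i hi
      rw [Finset.mem_range] at hi
      apply Submodule.smul_mem
      rw [Matrix.mulVec_mulVec, ← pow_add]
      exact ih (m - n + i) (by omega)

set_option maxHeartbeats 2000000 in
lemma exists_common_zero_of_rank_lt {p q : ℕ} (hp : 0 < p) (hq : 0 < q) (a c : ℕ → ℂ)
    (hrank : (Matrix.of fun (i j : Fin (p + q)) =>
        ((blockF p q a c ^ (j : ℕ)).mulVec (vecB p q)) i).rank < p + q) :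
    ∃ lam : ℂ, polyEv lam a p = 0 ∧ polyEv lam c q = 0 := by
  set F := blockF p q a c with hF
  set B := vecB p q with hB
  set M := (Matrix.of fun (i j : Fin (p + q)) => ((F ^ (j : ℕ)).mulVec B) i) with hM
  set S := Submodule.span ℂ (Set.range fun j : Fin (p + q) => F ^ (j : ℕ) *ᵥ B) with hS
  -- rank M = finrank S
  have hMT : Mᵀ = fun j : Fin (p + q) => F ^ (j : ℕ) *ᵥ B := rfl
  have hrankS : M.rank = Module.finrank ℂ S := by
    rw [Matrix.rank, Matrix.range_mulVecLin]; rfl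
  -- S ≠ ⊤
  have hSlt : S < ⊤ := by
    rcases lt_or_eq_of_le (le_top : S ≤ ⊤) with h | h
    · exact h
    · exfalso
      have : Module.finrank ℂ S = p + q := by
        rw [h]
        simpa using Module.finrank_pi (ι := Fin (p + q)) ℂ
      omega
  -- dual functional vanishing on S
  obtain ⟨f, hf0, hfS⟩ := Submodule.exists_dual_map_eq_bot_of_lt_top hSlt inferInstance
  set w0 : Fin (p + q) → ℂ := fun i => f (Pi.single i 1) with hw0def
  have hfw : ∀ v, f v = w0 ⬝ᵥ v := by
    intro v
    have hv : ∀ i, Pi.single i (v i) = v i • (Pi.single i 1 : Fin (p + q) → ℂ) := by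
      intro i; funext t; simp [Pi.single_apply]
    conv_lhs => rw [← Finset.univ_sum_single v]
    rw [map_sum, dotProduct]
    refine Finset.sum_congr rfl fun i _ => ?_
    rw [hv i, _root_.map_smul, smul_eq_mul, mul_comm]
  have hfzero : ∀ x ∈ S, f x = 0 := by
    intro x hx
    have : f x ∈ S.map f := Submodule.mem_map_of_mem hx
    rwa [hfS, Submodule.mem_bot] at this
  -- the annihilator submodule
  set W : Submodule ℂ (Fin (p + q) → ℂ) :=
    { carrier := {w | ∀ x ∈ S, w ⬝ᵥ x = 0}
      add_mem' := fun hu hv x hx => by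
        rw [add_dotProduct, hu x hx, hv x hx, add_zero]
      zero_mem' := fun x hx => zero_dotProduct x
      smul_mem' := fun t u hu x hx => by
        rw [smul_dotProduct, hu x hx, smul_zero] } with hW
  have hw0W : w0 ∈ W := fun x hx => by rw [← hfw]; exact hfzero x hx
  have hw0ne : w0 ≠ 0 := by
    intro h
    apply hf0
    apply LinearMap.ext
    intro v
    rw [hfw, h, zero_dotProduct, LinearMap.zero_apply]
  have : Nontrivial W := nontrivial_of_ne ⟨w0, hw0W⟩ 0 (by
    intro h
    exact hw0ne (by simpa using congrArg Subtype.val h))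
  -- S is F-invariant
  have hSinv : ∀ x ∈ S, F *ᵥ x ∈ S := by
    have hmap : S.map F.mulVecLin ≤ S := by
      rw [hS, Submodule.map_span]
      apply Submodule.span_le.mpr
      rintro y ⟨z, ⟨j, rfl⟩, rfl⟩
      simp only [Matrix.mulVecLin_apply, Matrix.mulVec_mulVec, ← pow_succ']
      exact krylov_mem F B ((j : ℕ) + 1)
    intro x hx
    exact hmap (Submodule.mem_map_of_mem hx)
  -- W is Fᵀ-invariant
  have hWinv : ∀ w ∈ W, Fᵀ.mulVecLin w ∈ W := by
    intro w hw x hx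
    rw [Matrix.mulVecLin_apply, Matrix.mulVec_transpose, ← Matrix.dotProduct_mulVec]
    exact hw (F *ᵥ x) (hSinv x hx)
  -- eigenvector of the restriction
  set T := Fᵀ.mulVecLin.restrict hWinv with hT
  obtain ⟨lam, hlam⟩ := Module.End.exists_eigenvalue T
  obtain ⟨v, hv⟩ := hlam.exists_hasEigenvector
  set w : Fin (p + q) → ℂ := (v : Fin (p + q) → ℂ) with hwdef
  have hwne : w ≠ 0 := by
    intro h
    exact hv.right (by simpa [hwdef, Submodule.coe_eq_zero] using h)
  have heig : w ᵥ* F = lam • w := by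
    have h1 : T v = lam • v := (Module.End.mem_eigenspace_iff).mp hv.left
    have h2 : Fᵀ.mulVecLin w = lam • w := by
      have := congrArg Subtype.val h1
      rwa [LinearMap.restrict_coe_apply] at this
    rwa [Matrix.mulVecLin_apply, Matrix.mulVec_transpose] at h2
  have hwB : w ⬝ᵥ B = 0 := by
    have hBmem : B ∈ S := by
      have := krylov_mem F B 0
      rwa [pow_zero, Matrix.one_mulVec] at this
    exact v.2 B hBmem
  -- switch to a ℕ-indexed version of w
  set u : ℕ → ℂ := fun k => if h : k < p + q then w ⟨k, h⟩ else 0 with hu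
  have hE : ∀ j : Fin (p + q), (w ᵥ* F) j = lam * w j := fun j => by
    rw [heig]; rfl
  have h1 : ∀ k, k + 1 < p → u (k + 1) = lam * u k + u 0 * a (k + 1) := by
    intro k hk
    have := hE ⟨k, by omega⟩
    rw [vecMul_blockF hp hq a c w ⟨k, by omega⟩] at this
    simp only [dif_pos (show (⟨k, by omega⟩ : Fin (p+q)).val < p by exact Nat.lt_of_succ_lt hk)] at this
    rw [dif_pos (show k + 1 < p from hk)] at this
    simp only [hu]
    rw [dif_pos (by omega : k + 1 < p + q), dif_pos (by omega : k < p + q),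
      dif_pos (by omega : 0 < p + q)]
    have h' : w ⟨k + 1, by omega⟩ - w ⟨0, by omega⟩ * a (k + 1) = lam * w ⟨k, by omega⟩ := this
    linear_combination h'
  have h2 : lam * u (p - 1) = -(u 0 * a p) := by
    have := hE ⟨p - 1, by omega⟩
    rw [vecMul_blockF hp hq a c w ⟨p - 1, by omega⟩] at this
    simp only [dif_pos (show p - 1 < p by omega)] at this
    rw [dif_neg (show ¬(p - 1 + 1 < p) by omega)] at this
    rw [show p - 1 + 1 = p by omega] at this
    simp only [hu]
    rw [dif_pos (by omega : p - 1 < p + q), dif_pos (by omega : 0 < p + q)]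
    linear_combination -this
  have h3 : ∀ k, p ≤ k → k + 1 < p + q → u (k + 1) = lam * u k + u p * c (k - p + 1) := by
    intro k hpk hk
    have := hE ⟨k, by omega⟩
    rw [vecMul_blockF hp hq a c w ⟨k, by omega⟩] at this
    rw [dif_neg (show ¬((⟨k, by omega⟩ : Fin (p+q)).val < p) by simp; omega)] at this
    rw [dif_pos (show k + 1 < p + q from hk)] at this
    simp only [hu]
    rw [dif_pos (by omega : k + 1 < p + q), dif_pos (by omega : k < p + q),
      dif_pos (by omega : p < p + q)]
    linear_combination this
  have h4 : lam * u (p + q - 1) = -(u p * c q) := by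
    have := hE ⟨p + q - 1, by omega⟩
    rw [vecMul_blockF hp hq a c w ⟨p + q - 1, by omega⟩] at this
    rw [dif_neg (show ¬((⟨p + q - 1, by omega⟩ : Fin (p+q)).val < p) by simp; omega)] at this
    rw [dif_neg (show ¬(p + q - 1 + 1 < p + q) by omega)] at this
    rw [show p + q - 1 - p + 1 = q by omega] at this
    simp only [hu]
    rw [dif_pos (by omega : p + q - 1 < p + q), dif_pos (by omega : p < p + q)]
    linear_combination -this
  have h5 : u 0 = u p := by
    have := hwB
    rw [dot_vecB hp hq] at this
    simp only [hu]
    rw [dif_pos (by omega : 0 < p + q), dif_pos (by omega : p < p + q)]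
    linear_combination this
  -- formulas
  have hA : ∀ k, k < p → u k = u 0 * polyEv lam a k := by
    intro k
    induction k with
    | zero => intro _; rw [polyEv_zero, mul_one]
    | succ k ih =>
        intro hk
        rw [h1 k hk, ih (by omega), polyEv_succ]
        ring
  have hBf : ∀ k, k < q → u (p + k) = u 0 * polyEv lam c k := by
    intro k
    induction k with
    | zero => intro _; rw [polyEv_zero, mul_one, Nat.add_zero, h5]
    | succ k ih =>
        intro hk
        rw [show p + (k + 1) = (p + k) + 1 by omega,
          h3 (p + k) (by omega) (by omega), ih (by omega),
          show p + k - p + 1 = k + 1 by omega, ← h5, polyEv_succ]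
        ring
  have hu0 : u 0 ≠ 0 := by
    intro h0
    apply hwne
    funext i
    have hi := i.isLt
    by_cases hip : (i : ℕ) < p
    · have := hA i hip
      rw [h0, zero_mul] at this
      simpa [hu, hi] using this
    · have hk : (i : ℕ) = p + ((i : ℕ) - p) := by omega
      have := hBf ((i : ℕ) - p) (by omega)
      rw [h0, zero_mul, ← hk] at this
      simpa [hu, hi] using this
  refine ⟨lam, ?_, ?_⟩
  · have := h2
    rw [hA (p - 1) (by omega)] at this
    have hps : polyEv lam a p = lam * polyEv lam a (p - 1) + a p := by
      conv_lhs => rw [show p = (p - 1) + 1 by omega]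
      rw [polyEv_succ, show p - 1 + 1 = p by omega]
    have : u 0 * polyEv lam a p = 0 := by rw [hps]; linear_combination this
    exact (mul_eq_zero.mp this).resolve_left hu0
  · have := h4
    rw [show p + q - 1 = p + (q - 1) by omega, hBf (q - 1) (by omega), ← h5] at this
    have hps : polyEv lam c q = lam * polyEv lam c (q - 1) + c q := by
      conv_lhs => rw [show q = (q - 1) + 1 by omega]
      rw [polyEv_succ, show q - 1 + 1 = q by omega]
    have : u 0 * polyEv lam c q = 0 := by rw [hps]; linear_combination this
    exact (mul_eq_zero.mp this).resolve_left hu0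

/-- The pair `(F, B)` is controllable (the controllability matrix
`(B, FB, …, F^{p+q-1}B)` has full rank `p+q`) if and only if the monic polynomials
`â(z) = z^p + a₁z^{p-1} + ⋯ + a_p` and `ĉ(z) = z^q + c₁z^{q-1} + ⋯ + c_q` have no
common zeros. -/
theorem controllable_iff_no_common_zero (p q : ℕ) (hp : 0 < p) (hq : 0 < q)
    (a c : ℕ → ℂ) :
    (∀ lam : ℂ, ¬(lam ^ p + ∑ k ∈ Finset.range p, a (k + 1) * lam ^ (p - 1 - k) = 0 ∧
        lam ^ q + ∑ k ∈ Finset.range q, c (k + 1) * lam ^ (q - 1 - k) = 0)) ↔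
      (Matrix.of fun (i j : Fin (p + q)) =>
          ((blockF p q a c ^ (j : ℕ)).mulVec (vecB p q)) i).rank = p + q := by
  constructor
  · intro hno
    by_contra hne
    have hle := Matrix.rank_le_width (Matrix.of fun (i j : Fin (p + q)) =>
        ((blockF p q a c ^ (j : ℕ)).mulVec (vecB p q)) i)
    have hlt := lt_of_le_of_ne hle hne
    obtain ⟨lam, ha, hc⟩ := exists_common_zero_of_rank_lt hp hq a c hlt
    exact hno lam ⟨ha, hc⟩
  · intro hr lam hcon
    obtain ⟨ha, hc⟩ := hcon
    have := rank_lt_of_common_zero hp hq lam a c ha hc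
    omega
end

section
/- Let c(z) = 1 + c_1 z + ... + c_n z^n with Hankel matrix S(ĉ) ((i,j)-entry c_{2n-i-j}, c_0 = 1), J the forward shift, e the first basis vector, c = (c_1,...,c_n)^T, and P the flip matrix. Then P S(ĉ) P (J - e c^T) = (P J P - c e^T) P S(ĉ) P, and both equal the matrix whose first n-1 columns contain the reversed Hankel pattern of (1, c_1, ..., c_{n-2}) and whose last column is -c_n times the last basis vector (explicitly: the n×n matrix M with M_{ij} = c_{i+j-n} for j ≤ n-1 where c_0=1 and c_k=0 for k<0, M_{in} = 0 for i < n, and M_{nn} = -c_n). -/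
open Matrix

/-- The `n×n` Hankel matrix `S(ĉ)` with first row `(c_{n-1}, …, c₁, c₀)` and zeros
below the anti-diagonal. -/
def Shat (n : ℕ) (c : ℕ → ℂ) : Matrix (Fin n) (Fin n) ℂ :=
  Matrix.of fun i j =>
    if (i : ℕ) + (j : ℕ) ≤ n - 1 then c (n - 1 - (i : ℕ) - (j : ℕ)) else 0

/-- The forward shift matrix `J` (`J_{ij} = 1` iff `i = j+1`). -/
def shiftJ (n : ℕ) : Matrix (Fin n) (Fin n) ℂ :=
  Matrix.of fun i j => if (i : ℕ) = (j : ℕ) + 1 then 1 else 0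

/-- The flip (anti-diagonal identity) matrix `P`. -/
def flipP (n : ℕ) : Matrix (Fin n) (Fin n) ℂ :=
  Matrix.of fun i j => if (i : ℕ) + (j : ℕ) = n - 1 then 1 else 0

lemma flip_mul {n : ℕ} (M : Matrix (Fin n) (Fin n) ℂ) (i j : Fin n) :
    (flipP n * M) i j = M i.rev j := by
  rw [Matrix.mul_apply, Finset.sum_eq_single i.rev]
  · have h : (i : ℕ) + (n - ((i : ℕ) + 1)) = n - 1 := by have := i.isLt; omega
    simp [flipP, Fin.val_rev, h]
  · intro k _ hk
    have h : ¬ ((i : ℕ) + (k : ℕ) = n - 1) := by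
      intro h; apply hk; apply Fin.ext
      have := i.isLt; have := k.isLt; simp [Fin.val_rev]; omega
    simp [flipP, h]
  · simp

lemma mul_flip {n : ℕ} (M : Matrix (Fin n) (Fin n) ℂ) (i j : Fin n) :
    (M * flipP n) i j = M i j.rev := by
  rw [Matrix.mul_apply, Finset.sum_eq_single j.rev]
  · have h : n - ((j : ℕ) + 1) + (j : ℕ) = n - 1 := by have := j.isLt; omega
    simp [flipP, Fin.val_rev, h]
  · intro k _ hk
    have h : ¬ ((k : ℕ) + (j : ℕ) = n - 1) := by
      intro h; apply hk; apply Fin.ext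
      have := j.isLt; have := k.isLt; simp [Fin.val_rev]; omega
    simp [flipP, h]
  · simp

lemma A_apply {n : ℕ} (c : ℕ → ℂ) (i j : Fin n) :
    (flipP n * Shat n c * flipP n) i j
      = if n - 1 ≤ (i : ℕ) + (j : ℕ) then c ((i : ℕ) + (j : ℕ) - (n - 1)) else 0 := by
  rw [mul_flip, flip_mul]
  have hi := i.isLt; have hj := j.isLt
  simp only [Shat, of_apply, Fin.val_rev]
  split_ifs with h1 h2 h2
  · congr 1; omega
  · exfalso; omega
  · exfalso; omega
  · rfl

lemma mul_J {n : ℕ} (M : Matrix (Fin n) (Fin n) ℂ) (i j : Fin n) :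
    (M * shiftJ n) i j = if h : (j : ℕ) + 1 < n then M i ⟨(j : ℕ) + 1, h⟩ else 0 := by
  rw [Matrix.mul_apply]
  split_ifs with h
  · rw [Finset.sum_eq_single ⟨(j : ℕ) + 1, h⟩]
    · simp [shiftJ]
    · intro k _ hk
      have : ¬ ((k : ℕ) = (j : ℕ) + 1) := fun hh => hk (Fin.ext hh)
      simp [shiftJ, this]
    · simp
  · apply Finset.sum_eq_zero; intro k _
    have : ¬ ((k : ℕ) = (j : ℕ) + 1) := by have := k.isLt; omega
    simp [shiftJ, this]

lemma J'_mul {n : ℕ} (M : Matrix (Fin n) (Fin n) ℂ) (i j : Fin n) :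
    ((Matrix.of fun a b : Fin n => if (b : ℕ) = (a : ℕ) + 1 then (1:ℂ) else 0) * M) i j
      = if h : (i : ℕ) + 1 < n then M ⟨(i : ℕ) + 1, h⟩ j else 0 := by
  rw [Matrix.mul_apply]
  split_ifs with h
  · rw [Finset.sum_eq_single ⟨(i : ℕ) + 1, h⟩]
    · simp
    · intro k _ hk
      have : ¬ ((k : ℕ) = (i : ℕ) + 1) := fun hh => hk (Fin.ext hh)
      simp [this]
    · simp
  · apply Finset.sum_eq_zero; intro k _
    have : ¬ ((k : ℕ) = (i : ℕ) + 1) := by have := k.isLt; omega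
    simp [this]

lemma PJP {n : ℕ} :
    flipP n * shiftJ n * flipP n
      = Matrix.of fun a b : Fin n => if (b : ℕ) = (a : ℕ) + 1 then (1:ℂ) else 0 := by
  ext i j
  rw [mul_flip, flip_mul]
  have hi := i.isLt; have hj := j.isLt
  simp only [shiftJ, of_apply, Fin.val_rev]
  split_ifs with h1 h2 h2 <;> first | rfl | (exfalso; omega)

lemma mul_E {n : ℕ} (hn : 0 < n) (c : ℕ → ℂ) (M : Matrix (Fin n) (Fin n) ℂ) (i j : Fin n) :
    (M * (Matrix.of fun a b : Fin n => if (a : ℕ) = 0 then c ((b : ℕ) + 1) else 0)) i j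
      = M i ⟨0, hn⟩ * c ((j : ℕ) + 1) := by
  rw [Matrix.mul_apply, Finset.sum_eq_single ⟨0, hn⟩]
  · simp
  · intro k _ hk
    have : ¬ ((k : ℕ) = 0) := fun hh => hk (Fin.ext hh)
    simp [this]
  · simp

lemma F_mul {n : ℕ} (hn : 0 < n) (c : ℕ → ℂ) (M : Matrix (Fin n) (Fin n) ℂ) (i j : Fin n) :
    ((Matrix.of fun a b : Fin n => if (b : ℕ) = 0 then c ((a : ℕ) + 1) else 0) * M) i j
      = c ((i : ℕ) + 1) * M ⟨0, hn⟩ j := by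
  rw [Matrix.mul_apply, Finset.sum_eq_single ⟨0, hn⟩]
  · simp
  · intro k _ hk
    have : ¬ ((k : ℕ) = 0) := fun hh => hk (Fin.ext hh)
    simp [this]
  · simp

/-- `P S(ĉ) P (J - e cᵀ) = (P J P - c eᵀ) P S(ĉ) P`, and both equal the matrix whose
top-left `(n-1)×(n-1)` corner is the Hankel pattern `c_{i+j-n}` (1-based; `c₀ = 1`,
`c_k = 0` for `k < 0`), whose last row and column vanish except for the `(n,n)`-entry
`-c_n`. -/
theorem PSP_shift_identity (n : ℕ) (hn : 0 < n) (c : ℕ → ℂ) (hc0 : c 0 = 1) :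
    flipP n * Shat n c * flipP n *
        (shiftJ n - Matrix.of fun i j : Fin n =>
          if (i : ℕ) = 0 then c ((j : ℕ) + 1) else 0)
      = (flipP n * shiftJ n * flipP n - Matrix.of fun i j : Fin n =>
          if (j : ℕ) = 0 then c ((i : ℕ) + 1) else 0) *
        (flipP n * Shat n c * flipP n) ∧
    flipP n * Shat n c * flipP n *
        (shiftJ n - Matrix.of fun i j : Fin n =>
          if (i : ℕ) = 0 then c ((j : ℕ) + 1) else 0)
      = Matrix.of fun i j : Fin n =>
          if (i : ℕ) < n - 1 ∧ (j : ℕ) < n - 1 then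
            (if n ≤ (i : ℕ) + (j : ℕ) + 2 then c ((i : ℕ) + (j : ℕ) + 2 - n) else 0)
          else if (i : ℕ) = n - 1 ∧ (j : ℕ) = n - 1 then -c n
          else 0 := by
  have key2 : flipP n * Shat n c * flipP n *
        (shiftJ n - Matrix.of fun i j : Fin n =>
          if (i : ℕ) = 0 then c ((j : ℕ) + 1) else 0)
      = Matrix.of fun i j : Fin n =>
          if (i : ℕ) < n - 1 ∧ (j : ℕ) < n - 1 then
            (if n ≤ (i : ℕ) + (j : ℕ) + 2 then c ((i : ℕ) + (j : ℕ) + 2 - n) else 0)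
          else if (i : ℕ) = n - 1 ∧ (j : ℕ) = n - 1 then -c n
          else 0 := by
    ext i j
    rw [Matrix.mul_sub, Matrix.sub_apply, mul_J, mul_E hn]
    simp only [A_apply, of_apply, Fin.val_mk]
    have hi := i.isLt; have hj := j.isLt
    split_ifs <;>
      first
      | (exfalso; omega)
      | ring1
      | (have e : (i : ℕ) + ((j : ℕ) + 1) - (n - 1) = (i : ℕ) + (j : ℕ) + 2 - n := by omega
         rw [e]; ring1)
      | (have e1 : (i : ℕ) + ((j : ℕ) + 1) - (n - 1) = (j : ℕ) + 1 := by omega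
         have e2 : (i : ℕ) + 0 - (n - 1) = 0 := by omega
         rw [e1, e2, hc0]; ring1)
      | (have e2 : (i : ℕ) + 0 - (n - 1) = 0 := by omega
         have e3 : (j : ℕ) + 1 = n := by omega
         rw [e2, e3, hc0]; ring1)
      | (have e2 : (i : ℕ) - (n - 1) = 0 := by omega
         have e3 : 1 + (j : ℕ) = n := by omega
         rw [e2, e3, hc0]; ring1)

  have key1 : (flipP n * shiftJ n * flipP n - Matrix.of fun i j : Fin n =>
          if (j : ℕ) = 0 then c ((i : ℕ) + 1) else 0) *
        (flipP n * Shat n c * flipP n)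
      = Matrix.of fun i j : Fin n =>
          if (i : ℕ) < n - 1 ∧ (j : ℕ) < n - 1 then
            (if n ≤ (i : ℕ) + (j : ℕ) + 2 then c ((i : ℕ) + (j : ℕ) + 2 - n) else 0)
          else if (i : ℕ) = n - 1 ∧ (j : ℕ) = n - 1 then -c n
          else 0 := by
    ext i j
    rw [Matrix.sub_mul, Matrix.sub_apply, PJP, J'_mul, F_mul hn]
    simp only [A_apply, of_apply, Fin.val_mk]
    have hi := i.isLt; have hj := j.isLt
    split_ifs <;>
      first
      | (exfalso; omega)
      | ring1
      | (have e : (i : ℕ) + 1 + (j : ℕ) - (n - 1) = (i : ℕ) + (j : ℕ) + 2 - n := by omega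
         rw [e]; ring1)
      | (have e1 : (i : ℕ) + 1 + (j : ℕ) - (n - 1) = (i : ℕ) + 1 := by omega
         have e2 : 0 + (j : ℕ) - (n - 1) = 0 := by omega
         rw [e1, e2, hc0]; ring1)
      | (have e2 : 0 + (j : ℕ) - (n - 1) = 0 := by omega
         have e3 : (i : ℕ) + 1 = n := by omega
         rw [e2, e3, hc0]; ring1)

  exact ⟨key2.trans key1.symm, key2⟩
end
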